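/- The cohomology of the dg-algebra (A_θ, d) is independent of θ as a graded algebra: H(A_θ) is isomorphic to the commutative algebra Z = ker d ∩ ker d*, where d*(a_0 + a_i ξ^i) = x^i a_i(x), and Z does not depend on θ. In particular H(A_θ) ≅ H(A_{θ'}) for any antisymmetric θ, θ'. -/

import Mathlib

open MvPolynomial TensorProduct

noncomputable def moyalD (n : ℕ) (θ : Matrix (Fin n) (Fin n) ℝ) :
    Module.End ℝ (MvPolynomial (Fin n) ℝ ⊗[ℝ] MvPolynomial (Fin n) ℝ) :=
  ∑ i : Fin n, ∑ j : Fin n,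
    θ i j • (TensorProduct.map (pderiv i).toLinearMap (pderiv j).toLinearMap)

/-- The Moyal–Weyl star product; the exponential series terminates on polynomials. -/
noncomputable def moyal (n : ℕ) (θ : Matrix (Fin n) (Fin n) ℝ)
    (f g : MvPolynomial (Fin n) ℝ) : MvPolynomial (Fin n) ℝ :=
  ∑ k ∈ Finset.range (f.totalDegree + 1),
    (((1 : ℝ) / 2) ^ k / (Nat.factorial k)) •
      (LinearMap.mul' ℝ (MvPolynomial (Fin n) ℝ)) ((moyalD n θ ^ k) (f ⊗ₜ[ℝ] g))

/-- By the PBW property, elements of the dg-algebra `A_θ` are represented as pairs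
`(a₀, a)` standing for `a₀(x) + a_i(x)ξⁱ`. -/
abbrev Apair (n : ℕ) := MvPolynomial (Fin n) ℝ × (Fin n → MvPolynomial (Fin n) ℝ)

/-- The product on `A_θ`: the Moyal–Weyl formula followed by the projection onto
terms at most linear in the ξ's (recall `ξⁱξʲ = 0` and the ξ's are central). -/
noncomputable def starPair (n : ℕ) (θ : Matrix (Fin n) (Fin n) ℝ)
    (a b : Apair n) : Apair n :=
  (moyal n θ a.1 b.1, fun i => moyal n θ a.1 (b.2 i) + moyal n θ (a.2 i) b.1)

/-- The differential `d(a₀ + a_i ξⁱ) = (∂_i a₀) ξⁱ`. -/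
noncomputable def dPair (n : ℕ) (a : Apair n) : Apair n :=
  (0, fun i => pderiv i a.1)

/-- The degree `−1` operator `d*(a₀ + a_iξⁱ) = xⁱ a_i(x)`. -/
noncomputable def dStar (n : ℕ) (a : Apair n) : MvPolynomial (Fin n) ℝ :=
  ∑ i : Fin n, X i * a.2 i

/-- The subspace `Z = ker d ∩ ker d*`. -/
def Zsub (n : ℕ) : Set (Apair n) :=
  {a | (∀ i : Fin n, pderiv i a.1 = 0) ∧ (∑ i : Fin n, X i * a.2 i) = 0}

lemma euler_monomial (n : ℕ) (d : Fin n →₀ ℕ) (r : ℝ) :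
    ∑ i : Fin n, X i * pderiv i (monomial d r) =
      ((∑ i : Fin n, d i : ℕ) : ℝ) • monomial d r := by
  have h : ∀ i : Fin n, X i * pderiv i (monomial d r)
      = ((d i : ℕ) : ℝ) • monomial d r := by
    intro i
    rw [pderiv_monomial]
    by_cases hi : d i = 0
    · simp [hi]
    · rw [X, monomial_mul, smul_monomial]
      have hidx : (Finsupp.single i 1) + (d - Finsupp.single i 1) = d := by
        ext j
        simp only [Finsupp.add_apply, Finsupp.tsub_apply, Finsupp.single_apply]
        rcases eq_or_ne i j with hj | hj
        · subst hj
          have h1 : (if i = i then 1 else 0) = 1 := if_pos rfl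
          omega
        · simp [hj]
      rw [hidx]
      congr 1
      simp [smul_eq_mul, mul_comm]
  rw [Finset.sum_congr rfl fun i _ => h i, ← Finset.sum_smul]
  congr 1
  push_cast; ring

lemma euler_coeff (n : ℕ) (f : MvPolynomial (Fin n) ℝ) (e : Fin n →₀ ℕ) :
    coeff e (∑ i : Fin n, X i * pderiv i f) = ((∑ i : Fin n, e i : ℕ) : ℝ) * coeff e f := by
  induction f using MvPolynomial.induction_on' with
  | monomial d r =>
    rw [euler_monomial, coeff_smul, smul_eq_mul, coeff_monomial]
    by_cases hd : d = e
    · subst hd; rfl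
    · simp [hd]
  | add p q hp hq =>
    simp only [map_add, mul_add, Finset.sum_add_distrib, coeff_add, hp, hq]
    try ring

lemma eq_C_of_euler_zero (n : ℕ) (f : MvPolynomial (Fin n) ℝ)
    (h : ∑ i : Fin n, X i * pderiv i f = 0) : f = C (constantCoeff f) := by
  ext e
  rw [coeff_C]
  by_cases he : e = 0
  · subst he; simp [constantCoeff_eq]
  · have h2 := euler_coeff n f e
    rw [h, coeff_zero] at h2
    have hne : ((∑ i : Fin n, e i : ℕ) : ℝ) ≠ 0 := by
      have hex : ∃ i, e i ≠ 0 := by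
        by_contra hc
        push_neg at hc
        exact he (Finsupp.ext fun i => hc i)
      obtain ⟨i, hi⟩ := hex
      have : 0 < ∑ i : Fin n, e i :=
        Finset.sum_pos' (fun _ _ => Nat.zero_le _) ⟨i, Finset.mem_univ i, Nat.pos_of_ne_zero hi⟩
      exact_mod_cast this.ne'
    have hco : coeff e f = 0 := (mul_eq_zero.mp h2.symm).resolve_left hne
    rw [hco, if_neg fun hh => he hh.symm]

lemma eq_C_of_pderiv_zero (n : ℕ) (f : MvPolynomial (Fin n) ℝ)
    (h : ∀ i, pderiv i f = 0) : f = C (constantCoeff f) :=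
  eq_C_of_euler_zero n f (by simp [h])

lemma moyal_of_left_const (n : ℕ) (θ : Matrix (Fin n) (Fin n) ℝ)
    (f g : MvPolynomial (Fin n) ℝ) (hf : ∀ i, pderiv i f = 0) :
    moyal n θ f g = f * g := by
  have hdeg : f.totalDegree = 0 := by
    conv_lhs => rw [eq_C_of_pderiv_zero n f hf]
    exact totalDegree_C _
  unfold moyal
  rw [hdeg]
  simp [Finset.sum_range_one, LinearMap.mul'_apply]

lemma moyal_of_right_const (n : ℕ) (θ : Matrix (Fin n) (Fin n) ℝ)
    (f g : MvPolynomial (Fin n) ℝ) (hg : ∀ j, pderiv j g = 0) :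
    moyal n θ f g = f * g := by
  have h0 : (moyalD n θ) (f ⊗ₜ[ℝ] g) = 0 := by
    simp [moyalD, LinearMap.sum_apply, LinearMap.smul_apply, TensorProduct.map_tmul, hg]
  have hk : ∀ k, (moyalD n θ ^ (k + 1)) (f ⊗ₜ[ℝ] g) = 0 := by
    intro k
    rw [pow_succ, Module.End.mul_apply, h0, map_zero]
  unfold moyal
  rw [Finset.sum_range_succ']
  simp [hk, LinearMap.mul'_apply]

lemma starPair_eq (n : ℕ) (θ : Matrix (Fin n) (Fin n) ℝ) (a b : Apair n)
    (ha : ∀ i, pderiv i a.1 = 0) (hb : ∀ i, pderiv i b.1 = 0) :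
    starPair n θ a b = (a.1 * b.1, fun i => a.1 * b.2 i + a.2 i * b.1) := by
  unfold starPair
  rw [moyal_of_left_const n θ _ _ ha]
  congr 1
  funext i
  rw [moyal_of_left_const n θ _ _ ha, moyal_of_right_const n θ _ _ hb]

theorem cohomology_independent_of_theta (n : ℕ)
    (θ θ' : Matrix (Fin n) (Fin n) ℝ)
    (hθ : ∀ i j, θ j i = -θ i j) (hθ' : ∀ i j, θ' j i = -θ' i j) :
    (∀ a ∈ Zsub n, ∀ b ∈ Zsub n, starPair n θ a b ∈ Zsub n) ∧
    (∀ a ∈ Zsub n, ∀ b ∈ Zsub n, starPair n θ a b = starPair n θ' a b) ∧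
    (∀ a ∈ Zsub n, ∀ b ∈ Zsub n, starPair n θ a b = starPair n θ b a) ∧
    (∀ a : Apair n, dPair n a = 0 → ∃ z ∈ Zsub n, ∃ c : Apair n, a = z + dPair n c) ∧
    (∀ z ∈ Zsub n, (∃ c : Apair n, z = dPair n c) → z = 0) := by
  refine ⟨?_, ?_, ?_, ?_, ?_⟩
  · intro a ha b hb
    rw [starPair_eq n θ a b ha.1 hb.1]
    constructor
    · intro i
      simp only [pderiv_mul, ha.1 i, hb.1 i, zero_mul, mul_zero, add_zero]
    · have : ∀ i : Fin n, X i * (a.1 * b.2 i + a.2 i * b.1)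
          = a.1 * (X i * b.2 i) + (X i * a.2 i) * b.1 := fun i => by ring
      rw [Finset.sum_congr rfl fun i _ => this i, Finset.sum_add_distrib,
        ← Finset.mul_sum, ← Finset.sum_mul, ha.2, hb.2]
      simp
  · intro a ha b hb
    rw [starPair_eq n θ a b ha.1 hb.1, starPair_eq n θ' a b ha.1 hb.1]
  · intro a ha b hb
    rw [starPair_eq n θ a b ha.1 hb.1, starPair_eq n θ b a hb.1 ha.1]
    refine Prod.ext (mul_comm _ _) (funext fun i => ?_)
    dsimp only
    ring
  · intro a hda
    have ha1 : ∀ i : Fin n, pderiv i a.1 = 0 := fun i =>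
      congrFun (congrArg Prod.snd hda) i
    set q : MvPolynomial (Fin n) ℝ := ∑ i : Fin n, X i * a.2 i with hqdef
    have hq0 : coeff 0 q = 0 := by
      have : constantCoeff q = 0 := by
        simp [hqdef, map_sum, map_mul]
      simpa [constantCoeff_eq] using this
    set g : MvPolynomial (Fin n) ℝ :=
      ∑ d ∈ q.support, monomial d (coeff d q / ((∑ i : Fin n, d i : ℕ) : ℝ)) with hgdef
    have hg : ∀ e : Fin n →₀ ℕ,
        coeff e g = coeff e q / ((∑ i : Fin n, e i : ℕ) : ℝ) := by
      intro e
      rw [hgdef, MvPolynomial.coeff_sum]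
      rw [Finset.sum_congr rfl fun d _ => coeff_monomial e d _]
      rw [Finset.sum_ite_eq' q.support e fun d => coeff d q / ((∑ i : Fin n, d i : ℕ) : ℝ)]
      by_cases he : e ∈ q.support
      · rw [if_pos he]
      · rw [if_neg he, MvPolynomial.notMem_support_iff.mp he, zero_div]
    have hEg : ∑ i : Fin n, X i * pderiv i g = q := by
      ext e
      rw [euler_coeff, hg]
      by_cases he : e = 0
      · subst he
        simp [hq0]
      · have hne : ((∑ i : Fin n, e i : ℕ) : ℝ) ≠ 0 := by
          have hex : ∃ i, e i ≠ 0 := by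
            by_contra hc
            push_neg at hc
            exact he (Finsupp.ext fun i => hc i)
          obtain ⟨i, hi⟩ := hex
          have : 0 < ∑ i : Fin n, e i :=
            Finset.sum_pos' (fun _ _ => Nat.zero_le _)
              ⟨i, Finset.mem_univ i, Nat.pos_of_ne_zero hi⟩
          exact_mod_cast this.ne'
        rw [← mul_div_assoc, mul_comm, mul_div_assoc, div_self hne, mul_one]
    refine ⟨(a.1, fun i => a.2 i - pderiv i g), ⟨ha1, ?_⟩, (g, 0), ?_⟩
    · have : ∀ i : Fin n, X i * (a.2 i - pderiv i g)
          = X i * a.2 i - X i * pderiv i g := fun i => by ring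
      rw [Finset.sum_congr rfl fun i _ => this i, Finset.sum_sub_distrib, hEg,
        ← hqdef, sub_self]
    · refine Prod.ext ?_ (funext fun i => ?_)
      · simp [dPair]
      · simp [dPair]
  · rintro z hz ⟨c, hc⟩
    have hz2 : ∀ i : Fin n, z.2 i = pderiv i c.1 := fun i =>
      congrFun (congrArg Prod.snd hc) i
    have heuler : ∑ i : Fin n, X i * pderiv i c.1 = 0 := by
      rw [← Finset.sum_congr rfl fun i _ => congrArg (X i * ·) (hz2 i)]
      exact hz.2
    have hC := eq_C_of_euler_zero n c.1 heuler
    have hp : ∀ i : Fin n, pderiv i c.1 = 0 := by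
      intro i
      rw [hC]
      exact pderiv_C
    rw [hc]
    unfold dPair
    refine Prod.ext rfl (funext fun i => ?_)
    simpa using hp i
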